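/- For any constants C₁, C₂, C₃, C₄ ∈ ℝ, the map φ : ℝ⁴∖{0} → ℝ⁴ defined by φ(x) = C₁·x + C₂·|x|²·x + C₃·x/|x|² + C₄·x/|x|⁴ is biharmonic, i.e., Δ(Δφ)(x) = 0 for all x ≠ 0, where Δ denotes the componentwise Euclidean Laplacian on ℝ⁴. -/

import Mathlib

open scoped RealInnerProductSpace

/-- The componentwise Euclidean Laplacian of a map defined on `EuclideanSpace ℝ (Fin m)`:
`Δ f (x) = ∑ᵢ ∂²f/∂xᵢ² (x)`. -/
noncomputable def lapE {m : ℕ} {F : Type*} [NormedAddCommGroup F] [NormedSpace ℝ F]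
    (f : EuclideanSpace ℝ (Fin m) → F) (x : EuclideanSpace ℝ (Fin m)) : F :=
  ∑ i : Fin m,
    fderiv ℝ (fun y => fderiv ℝ f y (EuclideanSpace.single i (1 : ℝ))) x
      (EuclideanSpace.single i (1 : ℝ))

namespace Stmt9

abbrev E4 := EuclideanSpace ℝ (Fin 4)

noncomputable def g (a b c d s : ℝ) : ℝ := a + b * s + c / s + d / s ^ 2
noncomputable def g₁ (b c d s : ℝ) : ℝ := b - c / s ^ 2 - 2 * d / s ^ 3
noncomputable def g₂ (c d s : ℝ) : ℝ := 2 * c / s ^ 3 + 6 * d / s ^ 4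

lemma hasDerivAt_g (a b c d : ℝ) {s : ℝ} (hs : s ≠ 0) :
    HasDerivAt (g a b c d) (g₁ b c d s) s := by
  have h := (((hasDerivAt_const s a).add ((hasDerivAt_id s).const_mul b)).add
      ((hasDerivAt_const s c).div (hasDerivAt_id s) hs)).add
      ((hasDerivAt_const s d).div (hasDerivAt_pow 2 s) (pow_ne_zero 2 hs))
  refine h.congr_deriv ?_
  unfold g₁; simp only [id]; field_simp; ring

lemma hasDerivAt_g₁ (b c d : ℝ) {s : ℝ} (hs : s ≠ 0) :
    HasDerivAt (g₁ b c d) (g₂ c d s) s := by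
  have h := (((hasDerivAt_const s b).sub
      ((hasDerivAt_const s c).div (hasDerivAt_pow 2 s) (pow_ne_zero 2 hs))).sub
      ((hasDerivAt_const s (2 * d)).div (hasDerivAt_pow 3 s) (pow_ne_zero 3 hs)))
  refine h.congr_deriv ?_
  unfold g₂; field_simp; ring

lemma hasFDerivAt_sq (x : E4) :
    HasFDerivAt (fun y : E4 => ‖y‖ ^ 2) ((2 : ℝ) • innerSL ℝ x) x := by
  have h := (hasStrictFDerivAt_norm_sq x).hasFDerivAt
  refine h.congr_fderiv ?_
  ext v
  simp [two_smul]

noncomputable def Φ (a b c d : ℝ) : E4 → E4 := fun y => g a b c d (‖y‖ ^ 2) • y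

lemma hasFDerivAt_gs (a b c d : ℝ) {x : E4} (hx : x ≠ 0) :
    HasFDerivAt (fun y : E4 => g a b c d (‖y‖ ^ 2))
      (g₁ b c d (‖x‖ ^ 2) • ((2 : ℝ) • innerSL ℝ x)) x := by
  have hs : ‖x‖ ^ 2 ≠ 0 := pow_ne_zero 2 (norm_ne_zero_iff.mpr hx)
  exact (hasDerivAt_g a b c d hs).comp_hasFDerivAt x (hasFDerivAt_sq x)

lemma hasFDerivAt_g₁s (b c d : ℝ) {x : E4} (hx : x ≠ 0) :
    HasFDerivAt (fun y : E4 => g₁ b c d (‖y‖ ^ 2))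
      (g₂ c d (‖x‖ ^ 2) • ((2 : ℝ) • innerSL ℝ x)) x := by
  have hs : ‖x‖ ^ 2 ≠ 0 := pow_ne_zero 2 (norm_ne_zero_iff.mpr hx)
  exact (hasDerivAt_g₁ b c d hs).comp_hasFDerivAt x (hasFDerivAt_sq x)

lemma hasFDerivAt_Phi (a b c d : ℝ) {x : E4} (hx : x ≠ 0) :
    HasFDerivAt (Φ a b c d)
      (g a b c d (‖x‖ ^ 2) • ContinuousLinearMap.id ℝ E4
        + (g₁ b c d (‖x‖ ^ 2) • ((2 : ℝ) • innerSL ℝ x)).smulRight x) x :=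
  (hasFDerivAt_gs a b c d hx).smul (hasFDerivAt_id x)

noncomputable def T (a b c d : ℝ) (i : Fin 4) : E4 → E4 := fun y =>
  g a b c d (‖y‖ ^ 2) • EuclideanSpace.single i (1 : ℝ)
    + (g₁ b c d (‖y‖ ^ 2) * (2 * y i)) • y

lemma fderiv_Phi_apply (a b c d : ℝ) {y : E4} (hy : y ≠ 0) (i : Fin 4) :
    fderiv ℝ (Φ a b c d) y (EuclideanSpace.single i (1 : ℝ)) = T a b c d i y := by
  rw [(hasFDerivAt_Phi a b c d hy).fderiv]
  simp [T, ContinuousLinearMap.smulRight_apply, innerSL_apply_apply,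
    EuclideanSpace.inner_single_right, real_inner_comm, mul_comm]

lemma hasFDerivAt_T (a b c d : ℝ) (i : Fin 4) {x : E4} (hx : x ≠ 0) :
    HasFDerivAt (T a b c d i)
      ((g₁ b c d (‖x‖ ^ 2) • ((2 : ℝ) • innerSL ℝ x)).smulRight
          (EuclideanSpace.single i (1 : ℝ))
        + ((g₁ b c d (‖x‖ ^ 2) * (2 * x i)) • ContinuousLinearMap.id ℝ E4
          + (g₁ b c d (‖x‖ ^ 2) • ((2 : ℝ) • (EuclideanSpace.proj i : E4 →L[ℝ] ℝ))
              + (2 * x i) • (g₂ c d (‖x‖ ^ 2) • ((2 : ℝ) • innerSL ℝ x))).smulRight x)) x := by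
  have h1 := (hasFDerivAt_gs a b c d hx).smul_const (EuclideanSpace.single i (1 : ℝ))
  have hD : HasFDerivAt (fun y : E4 => 2 * y i)
      ((2 : ℝ) • (EuclideanSpace.proj i : E4 →L[ℝ] ℝ)) x :=
    (EuclideanSpace.proj i : E4 →L[ℝ] ℝ).hasFDerivAt.const_mul 2
  have hB := (hasFDerivAt_g₁s b c d hx).mul hD
  exact h1.add (hB.smul (hasFDerivAt_id x))

lemma sum_coord_smul (x : E4) :
    ∑ i : Fin 4, x i • EuclideanSpace.single i (1 : ℝ) = x := by
  have h := (EuclideanSpace.basisFun (Fin 4) ℝ).sum_repr x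
  simpa using h

lemma sum_sq_coord (x : E4) : ∑ i : Fin 4, x i * x i = ‖x‖ ^ 2 := by
  rw [← real_inner_self_eq_norm_sq]
  simp only [PiLp.inner_apply, RCLike.inner_apply, conj_trivial]

lemma lapE_Phi (a b c d : ℝ) {x : E4} (hx : x ≠ 0) :
    lapE (Φ a b c d) x = Φ (12 * b) 0 0 (-4 * c) x := by
  have hs : ‖x‖ ^ 2 ≠ 0 := pow_ne_zero 2 (norm_ne_zero_iff.mpr hx)
  have hmem : {y : E4 | y ≠ 0} ∈ nhds x := isOpen_compl_singleton.mem_nhds hx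
  have key : ∀ i : Fin 4,
      fderiv ℝ (fun y => fderiv ℝ (Φ a b c d) y (EuclideanSpace.single i (1 : ℝ))) x
        (EuclideanSpace.single i (1 : ℝ))
      = (4 * g₁ b c d (‖x‖ ^ 2)) • (x i • EuclideanSpace.single i (1 : ℝ))
        + (2 * g₁ b c d (‖x‖ ^ 2) + 4 * g₂ c d (‖x‖ ^ 2) * (x i * x i)) • x := by
    intro i
    have hev : (fun y => fderiv ℝ (Φ a b c d) y (EuclideanSpace.single i (1 : ℝ)))
        =ᶠ[nhds x] T a b c d i := by
      filter_upwards [hmem] with y hy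
      exact fderiv_Phi_apply a b c d hy i
    rw [hev.fderiv_eq, (hasFDerivAt_T a b c d i hx).fderiv]
    simp only [ContinuousLinearMap.add_apply, ContinuousLinearMap.smulRight_apply,
      ContinuousLinearMap.smul_apply, ContinuousLinearMap.id_apply, innerSL_apply_apply,
      EuclideanSpace.inner_single_right, map_one, RCLike.conj_to_real,
      EuclideanSpace.single_apply, smul_eq_mul, mul_one, if_pos rfl]
    have hp : (EuclideanSpace.proj i : E4 →L[ℝ] ℝ) (EuclideanSpace.single i 1) = 1 := by
      simp [EuclideanSpace.proj, PiLp.proj, PiLp.projₗ, EuclideanSpace.single_apply]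
    rw [hp]
    module
  unfold lapE
  rw [Finset.sum_congr rfl fun i _ => key i, Finset.sum_add_distrib, ← Finset.smul_sum,
    ← Finset.sum_smul, sum_coord_smul]
  have hsum : (∑ i : Fin 4, (2 * g₁ b c d (‖x‖ ^ 2) + 4 * g₂ c d (‖x‖ ^ 2) * (x i * x i)))
      = 8 * g₁ b c d (‖x‖ ^ 2) + 4 * g₂ c d (‖x‖ ^ 2) * ‖x‖ ^ 2 := by
    rw [Finset.sum_add_distrib, Finset.sum_const, ← Finset.mul_sum, sum_sq_coord]
    simp [Finset.card_univ]
    ring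
  rw [hsum, ← add_smul]
  show _ = g (12 * b) 0 0 (-4 * c) (‖x‖ ^ 2) • x
  congr 1
  unfold g g₁ g₂
  field_simp
  ring

lemma lapE_congr {m : ℕ} {F : Type*} [NormedAddCommGroup F] [NormedSpace ℝ F]
    {f h : EuclideanSpace ℝ (Fin m) → F} {x : EuclideanSpace ℝ (Fin m)}
    (hfh : f =ᶠ[nhds x] h) : lapE f x = lapE h x := by
  unfold lapE
  refine Finset.sum_congr rfl fun i _ => ?_
  have h1 : (fun y => fderiv ℝ f y (EuclideanSpace.single i (1 : ℝ)))
      =ᶠ[nhds x] (fun y => fderiv ℝ h y (EuclideanSpace.single i (1 : ℝ))) := by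
    filter_upwards [eventually_eventually_nhds.mpr hfh] with y hy
    rw [Filter.EventuallyEq.fderiv_eq (hy : _ =ᶠ[nhds y] _)]
  rw [h1.fderiv_eq]

end Stmt9

theorem stmt_9 (C₁ C₂ C₃ C₄ : ℝ) :
    ∀ x : EuclideanSpace ℝ (Fin 4), x ≠ 0 →
      lapE (lapE (fun y : EuclideanSpace ℝ (Fin 4) =>
        C₁ • y + (C₂ * ‖y‖ ^ 2) • y + (C₃ / ‖y‖ ^ 2) • y + (C₄ / ‖y‖ ^ 4) • y)) x = 0 := by
  intro x hx
  have hφ : (fun y : Stmt9.E4 =>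
      C₁ • y + (C₂ * ‖y‖ ^ 2) • y + (C₃ / ‖y‖ ^ 2) • y + (C₄ / ‖y‖ ^ 4) • y)
      = Stmt9.Φ C₁ C₂ C₃ C₄ := by
    funext y
    show _ = Stmt9.g C₁ C₂ C₃ C₄ (‖y‖ ^ 2) • y
    unfold Stmt9.g
    rw [show ‖y‖ ^ 4 = (‖y‖ ^ 2) ^ 2 by ring]
    rw [add_smul, add_smul, add_smul]
  rw [hφ]
  have hmem : {y : Stmt9.E4 | y ≠ 0} ∈ nhds x := isOpen_compl_singleton.mem_nhds hx
  have h1 : lapE (Stmt9.Φ C₁ C₂ C₃ C₄) =ᶠ[nhds x] Stmt9.Φ (12 * C₂) 0 0 (-4 * C₃) := by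
    filter_upwards [hmem] with y hy
    exact Stmt9.lapE_Phi C₁ C₂ C₃ C₄ hy
  rw [Stmt9.lapE_congr h1, Stmt9.lapE_Phi _ _ _ _ hx]
  unfold Stmt9.Φ Stmt9.g
  norm_num
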